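/- arXiv:2312.03622 — 2 statements merged into one kernel-verified Lean document; each statement's English description precedes it below -/
import Mathlib

section
/- Let A ⊆ B be an inclusion of unital C*-algebras with A a closed *-subalgebra of B containing the unit 1_B. Suppose that for every self-adjoint a ∈ A and every ε > 0 there exists an invertible self-adjoint b ∈ B with ‖a − b‖ ≤ ε. Then for all positive x, y ∈ A with x·y = 0 and every ε > 0 there exists a projection p ∈ B such that ‖p·x − x‖ ≤ ε and ‖(1−p)·y − y‖ ≤ ε. -/
open CFC NNReal

section AuxLemmas
variable {B : Type*} [CStarAlgebra B] [PartialOrder B] [StarOrderedRing B]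



lemma aux_isUnit_sqrt {b : B} (hb : 0 ≤ b) (hbu : IsUnit b) : IsUnit (sqrt b) := by
  rw [← spectrum.zero_notMem_iff ℝ≥0] at hbu ⊢
  rw [CFC.sqrt_eq_cfc]
  rw [cfc_map_spectrum NNReal.sqrt b]
  rintro ⟨t, ht, ht0⟩
  have ht' : t = 0 := by rw [← NNReal.mul_self_sqrt t, ht0, mul_zero]
  exact hbu (ht' ▸ ht)

lemma aux_sqrt_le_sqrt_of_isUnit [Nontrivial B] {a b : B} (ha : 0 ≤ a) (hb : 0 ≤ b) (hbu : IsUnit b)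
    (hab : a ≤ b) : sqrt a ≤ sqrt b := by
  have hsb : (0 : B) ≤ sqrt b := sqrt_nonneg _
  have hsbu : IsUnit (sqrt b) := aux_isUnit_sqrt hb hbu
  have h0b : 0 ∉ spectrum ℝ≥0 b := (spectrum.zero_notMem_iff ℝ≥0).mpr hbu
  have h1 : ‖sqrt a * b ^ (-(1/2) : ℝ)‖ ≤ 1 := (le_iff_norm_sqrt_mul_rpow a b ha (hbu.isStrictlyPositive hb)).mp hab
  rw [le_iff_norm_sqrt_mul_rpow (sqrt a) (sqrt b) (sqrt_nonneg _) (hsbu.isStrictlyPositive hsb)]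
  have e1 : (sqrt b) ^ (-(1/2) : ℝ) = b ^ (-(1/4) : ℝ) := by
    rw [CFC.sqrt_eq_rpow, CFC.rpow_rpow b _ _ (by norm_num) (hbu.isStrictlyPositive hb)]
    norm_num
  have e2 : sqrt (sqrt a) = a ^ (1/4 : ℝ≥0) := by
    rw [CFC.sqrt_eq_nnrpow, CFC.sqrt_eq_nnrpow, CFC.nnrpow_nnrpow]
    congr 1
    rw [← NNReal.coe_inj]
    push_cast
    norm_num
  rw [e1, e2]
  set s₁ : B := a ^ (1/4 : ℝ≥0) with hs₁def
  set r : B := b ^ (-(1/4) : ℝ) with hrdef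
  have hs₁ : (0:B) ≤ s₁ := CFC.nnrpow_nonneg
  have hr : (0:B) ≤ r := CFC.rpow_nonneg
  have hrr : r * r = b ^ (-(1/2) : ℝ) := by
    rw [hrdef, ← CFC.rpow_add hbu]; norm_num
  have hss : s₁ * s₁ = sqrt a := by
    rw [hs₁def, ← CFC.nnrpow_add (x := 1/4) (y := 1/4) (by norm_num) (by norm_num), CFC.sqrt_eq_nnrpow]
    congr 1
    rw [← NNReal.coe_inj]
    push_cast
    norm_num
  -- the conjugated element
  set c : B := r * (sqrt a * r) with hcdef
  have hc : (0:B) ≤ c := by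
    have := conjugate_nonneg_of_nonneg (sqrt_nonneg (a := a)) hr
    rwa [hcdef, ← mul_assoc]
  have hcsa : IsSelfAdjoint c := .of_nonneg hc
  have hnorm_eq : ‖s₁ * r‖ * ‖s₁ * r‖ = ‖c‖ := by
    rw [← CStarRing.norm_star_mul_self]
    congr 1
    rw [star_mul, (IsSelfAdjoint.of_nonneg hs₁).star_eq, (IsSelfAdjoint.of_nonneg hr).star_eq]
    rw [hcdef, ← hss]
    noncomm_ring
  have hkey : ‖c‖₊ ≤ ‖sqrt a * b ^ (-(1/2) : ℝ)‖₊ := by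
    have hspec : ∀ z ∈ spectrum ℂ c, ‖z‖₊ ≤ ‖sqrt a * b ^ (-(1/2) : ℝ)‖₊ := by
      intro z hz
      rcases eq_or_ne z 0 with rfl | hz0
      · simp
      · have hz' : z ∈ spectrum ℂ (r * (sqrt a * r)) \ {0} := ⟨hcdef ▸ hz, hz0⟩
        rw [spectrum.nonzero_mul_comm] at hz'
        have : z ∈ spectrum ℂ (sqrt a * b ^ (-(1/2) : ℝ)) := by
          rw [← hrr, ← mul_assoc]
          exact hz'.1
        exact_mod_cast spectrum.norm_le_norm_of_mem this
    have := hcsa.spectralRadius_eq_nnnorm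
    rw [← ENNReal.coe_le_coe, ← this, spectralRadius]
    exact iSup₂_le fun z hz => ENNReal.coe_le_coe.mpr (hspec z hz)
  have hc1 : ‖c‖ ≤ 1 := by
    calc ‖c‖ ≤ ‖sqrt a * b ^ (-(1/2) : ℝ)‖ := by exact_mod_cast hkey
    _ ≤ 1 := h1
  nlinarith [norm_nonneg (s₁ * r), hnorm_eq ▸ hc1]


lemma aux_algebraMap_nonneg {r : ℝ} (hr : 0 ≤ r) : (0:B) ≤ algebraMap ℝ B r := by
  rw [Algebra.algebraMap_eq_smul_one]
  exact smul_nonneg hr zero_le_one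

lemma aux_sqrt_eq_real_cfc {a : B} (ha : 0 ≤ a) : sqrt a = cfc (fun t : ℝ => Real.sqrt t) a := by
  rw [CFC.sqrt_eq_cfc, cfc_nnreal_eq_real NNReal.sqrt a ha]
  exact cfc_congr fun t ht => by rw [Real.sqrt]

lemma aux_sqrt_add_sq {d : B} (hd : 0 ≤ d) {ε : ℝ} (hε : 0 ≤ ε) :
    sqrt (d + algebraMap ℝ B (ε^2)) ≤ sqrt d + algebraMap ℝ B ε := by
  have hdsa : IsSelfAdjoint d := .of_nonneg hd
  have he : cfc (fun t : ℝ => t + ε^2) d = d + algebraMap ℝ B (ε^2) := by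
    rw [cfc_add (a := d) (fun t => t) (fun _ => ε^2) (by fun_prop) (by fun_prop),
      cfc_id' ℝ d, cfc_const (ε^2) d]
  have hd' : 0 ≤ d + algebraMap ℝ B (ε^2) :=
    add_nonneg hd (aux_algebraMap_nonneg (by positivity))
  have h1 : sqrt (d + algebraMap ℝ B (ε^2)) = cfc (fun t : ℝ => Real.sqrt (t + ε^2)) d := by
    rw [aux_sqrt_eq_real_cfc hd', ← he,
      ← cfc_comp' (fun t : ℝ => Real.sqrt t) (fun t : ℝ => t + ε^2) d
        (Real.continuous_sqrt.comp_continuousOn (by fun_prop)) (by fun_prop) hdsa]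
  have h2 : sqrt d + algebraMap ℝ B ε = cfc (fun t : ℝ => Real.sqrt t + ε) d := by
    rw [aux_sqrt_eq_real_cfc hd, cfc_add (a := d) (fun t : ℝ => Real.sqrt t) (fun _ => ε)
      (Real.continuous_sqrt.continuousOn) (by fun_prop), cfc_const ε d]
  rw [h1, h2]
  refine cfc_mono (fun t ht => ?_)
    (Real.continuous_sqrt.comp_continuousOn (by fun_prop) : ContinuousOn _ _)
    ((Real.continuous_sqrt.continuousOn).add (by fun_prop))
  calc Real.sqrt (t + ε^2) ≤ Real.sqrt ((Real.sqrt t + ε)^2) := by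
        apply Real.sqrt_le_sqrt
        have h0 : 0 ≤ Real.sqrt t := Real.sqrt_nonneg t
        have := Real.sq_sqrt (show (0:ℝ) ≤ t from spectrum_nonneg_of_nonneg hd ht)
        nlinarith
    _ = Real.sqrt t + ε := Real.sqrt_sq (by positivity)


lemma aux_sqrt_le_sqrt [Nontrivial B] {a b : B} (ha : 0 ≤ a) (hb : 0 ≤ b) (hab : a ≤ b) :
    sqrt a ≤ sqrt b := by
  have key : ∀ ε : ℝ, 0 < ε → sqrt a ≤ sqrt b + algebraMap ℝ B ε := by
    intro ε hε
    have hb' : 0 ≤ b + algebraMap ℝ B (ε^2) :=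
      add_nonneg hb (aux_algebraMap_nonneg (by positivity))
    have hbu : IsUnit (b + algebraMap ℝ B (ε^2)) := by
      refine CStarAlgebra.isUnit_of_le (algebraMap ℝ B (ε^2)) ?_ (IsUnit.isStrictlyPositive ?_ (aux_algebraMap_nonneg (by positivity)))
      · exact le_add_of_nonneg_left hb
      · exact (isUnit_iff_ne_zero.mpr (by positivity)).map (algebraMap ℝ B)
    calc sqrt a ≤ sqrt (b + algebraMap ℝ B (ε^2)) :=
          aux_sqrt_le_sqrt_of_isUnit ha hb' hbu (hab.trans (le_add_of_nonneg_right (aux_algebraMap_nonneg (by positivity))))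
      _ ≤ sqrt b + algebraMap ℝ B ε := aux_sqrt_add_sq hb hε.le
  have ht : Filter.Tendsto (fun ε : ℝ => sqrt b + algebraMap ℝ B ε) (nhdsWithin 0 (Set.Ioi 0)) (nhds (sqrt b)) := by
    have : Filter.Tendsto (fun ε : ℝ => sqrt b + algebraMap ℝ B ε) (nhds 0) (nhds (sqrt b + algebraMap ℝ B 0)) := by
      exact (continuous_const.add ((continuous_algebraMap ℝ B))).tendsto 0
    simpa using this.mono_left nhdsWithin_le_nhds
  refine ge_of_tendsto ht ?_
  filter_upwards [self_mem_nhdsWithin] with ε hε using key ε hε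

lemma aux_norm_le_of_le {z : B} (hz : IsSelfAdjoint z) {r : ℝ} (hr : 0 ≤ r)
    (h1 : -(algebraMap ℝ B r) ≤ z) (h2 : z ≤ algebraMap ℝ B r) : ‖z‖ ≤ r := by
  have hs2 : ∀ t ∈ spectrum ℝ z, t ≤ r := (le_algebraMap_iff_spectrum_le (a := z) hz).mp h2
  have hs1 : ∀ t ∈ spectrum ℝ z, -r ≤ t := by
    have : algebraMap ℝ B (-r) ≤ z := by rwa [map_neg]
    exact (algebraMap_le_iff_le_spectrum (a := z) hz).mp this
  have : ‖cfc (id : ℝ → ℝ) z‖ ≤ r :=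
    norm_cfc_le hr fun t ht => by
      rw [Real.norm_eq_abs, abs_le]; exact ⟨hs1 t ht, hs2 t ht⟩
  rwa [cfc_id ℝ z hz] at this

lemma aux_holder [Nontrivial B] {c d : B} (hc : 0 ≤ c) (hd : 0 ≤ d) :
    ‖sqrt c - sqrt d‖ ≤ Real.sqrt ‖c - d‖ := by
  have key : ∀ c d : B, 0 ≤ c → 0 ≤ d → sqrt c - sqrt d ≤ algebraMap ℝ B (Real.sqrt ‖c - d‖) := by
    intro c d hc hd
    have hsq : (Real.sqrt ‖c - d‖)^2 = ‖c - d‖ := Real.sq_sqrt (norm_nonneg _)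
    have h1 : c ≤ d + algebraMap ℝ B ‖c - d‖ := by
      have h := IsSelfAdjoint.le_algebraMap_norm_self
        (a := c - d) ((IsSelfAdjoint.of_nonneg hc).sub (IsSelfAdjoint.of_nonneg hd))
      calc c = d + (c - d) := by abel
        _ ≤ d + algebraMap ℝ B ‖c - d‖ := by exact add_le_add le_rfl h
    have h2 : sqrt c ≤ sqrt d + algebraMap ℝ B (Real.sqrt ‖c - d‖) := by
      calc sqrt c ≤ sqrt (d + algebraMap ℝ B ‖c - d‖) :=
            aux_sqrt_le_sqrt hc (add_nonneg hd (aux_algebraMap_nonneg (norm_nonneg _))) h1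
        _ ≤ sqrt d + algebraMap ℝ B (Real.sqrt ‖c - d‖) := by
            have := aux_sqrt_add_sq hd (ε := Real.sqrt ‖c - d‖) (Real.sqrt_nonneg _)
            rwa [hsq] at this
    exact sub_le_iff_le_add'.mpr h2
  have hA := key c d hc hd
  have hB := key d c hd hc
  rw [norm_sub_rev] at hB
  refine aux_norm_le_of_le ((IsSelfAdjoint.of_nonneg (sqrt_nonneg _)).sub (.of_nonneg (sqrt_nonneg _)))
    (Real.sqrt_nonneg _) ?_ hA
  have h3 : -(sqrt c - sqrt d) ≤ algebraMap ℝ B (Real.sqrt ‖c - d‖) := by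
    rw [neg_sub]; exact hB
  exact neg_le.mp h3



lemma aux_mul_self_nonneg {b : B} (hb : IsSelfAdjoint b) : 0 ≤ b * b := by
  have := star_mul_self_nonneg b; rwa [hb.star_eq] at this

lemma aux_negPart_formula {b : B} (hb : IsSelfAdjoint b) :
    b⁻ = (1/2 : ℝ) • (sqrt (b * b) - b) := by
  have hbb : 0 ≤ b * b := aux_mul_self_nonneg hb
  have habs : sqrt (b * b) = cfc (fun t : ℝ => |t|) b := by
    have hsq : cfc (fun t : ℝ => t * t) b = b * b := by
      rw [cfc_mul (a := b) (fun t => t) (fun t => t) (by fun_prop) (by fun_prop), cfc_id' ℝ b]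
    rw [aux_sqrt_eq_real_cfc hbb, ← hsq,
      ← cfc_comp' (fun t : ℝ => Real.sqrt t) (fun t : ℝ => t * t) b
        (Real.continuous_sqrt.comp_continuousOn (by fun_prop)) (by fun_prop) hb]
    exact cfc_congr fun t _ => Real.sqrt_mul_self_eq_abs t
  have h2 : cfc (fun t : ℝ => t⁻) b = (1/2 : ℝ) • (cfc (fun t : ℝ => |t|) b - b) := by
    have : cfc (fun t : ℝ => |t| - t) b = cfc (fun t : ℝ => |t|) b - b := by
      rw [cfc_sub (fun t : ℝ => |t|) (fun t : ℝ => t) b (by fun_prop) (by fun_prop), cfc_id' ℝ b]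
    rw [← this, ← cfc_const_mul ((1:ℝ)/2) (fun t : ℝ => |t| - t) b (by fun_prop)]
    refine cfc_congr fun t _ => ?_
    rcases le_total t 0 with h | h
    · rw [_root_.negPart_def, sup_eq_left.2 (by linarith), abs_of_nonpos h]; ring
    · rw [_root_.negPart_def, sup_eq_right.2 (by linarith), abs_of_nonneg h]; ring
  rw [CFC.negPart_def, cfcₙ_eq_cfc, h2, habs]

lemma aux_negPart_diff [Nontrivial B] {a b : B} (ha : IsSelfAdjoint a) (hb : IsSelfAdjoint b) :
    ‖a⁻ - b⁻‖ ≤ (Real.sqrt (‖a - b‖ * (‖a‖ + ‖b‖)) + ‖a - b‖) / 2 := by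
  rw [aux_negPart_formula ha, aux_negPart_formula hb, ← smul_sub]
  have e : (sqrt (a*a) - a) - (sqrt (b*b) - b) = (sqrt (a*a) - sqrt (b*b)) + (b - a) := by abel
  rw [e, norm_smul]
  have h1 : ‖sqrt (a*a) - sqrt (b*b)‖ ≤ Real.sqrt (‖a - b‖ * (‖a‖ + ‖b‖)) := by
    refine (aux_holder (aux_mul_self_nonneg ha) (aux_mul_self_nonneg hb)).trans ?_
    apply Real.sqrt_le_sqrt
    calc ‖a*a - b*b‖ = ‖a*(a-b) + (a-b)*b‖ := by congr 1; noncomm_ring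
      _ ≤ ‖a*(a-b)‖ + ‖(a-b)*b‖ := norm_add_le _ _
      _ ≤ ‖a‖*‖a-b‖ + ‖a-b‖*‖b‖ := add_le_add (norm_mul_le _ _) (norm_mul_le _ _)
      _ = ‖a-b‖ * (‖a‖ + ‖b‖) := by ring
  have h2 : ‖(sqrt (a*a) - sqrt (b*b)) + (b - a)‖ ≤ Real.sqrt (‖a - b‖ * (‖a‖ + ‖b‖)) + ‖a - b‖ := by
    refine (norm_add_le _ _).trans (add_le_add h1 ?_)
    rw [norm_sub_rev]
  rw [Real.norm_eq_abs]
  have : |(1:ℝ)/2| = 1/2 := by norm_num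
  rw [this]
  linarith

end AuxLemmas



/-- A projection in a C*-algebra: a self-adjoint idempotent. -/
def IsProjection {B : Type*} [Mul B] [Star B] (p : B) : Prop := star p = p ∧ p * p = p

set_option maxHeartbeats 1000000 in
theorem stmt2 {B : Type*} [CStarAlgebra B] [PartialOrder B] [StarOrderedRing B]
    (A : StarSubalgebra ℂ B) (hA : IsClosed (A : Set B))
    (h : ∀ a ∈ A, IsSelfAdjoint a → ∀ ε : ℝ, 0 < ε →
      ∃ b : B, IsSelfAdjoint b ∧ IsUnit b ∧ ‖a - b‖ ≤ ε) :
    ∀ x ∈ A, ∀ y ∈ A, 0 ≤ x → 0 ≤ y → x * y = 0 → ∀ ε : ℝ, 0 < ε →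
      ∃ p : B, IsProjection p ∧ ‖p * x - x‖ ≤ ε ∧ ‖(1 - p) * y - y‖ ≤ ε := by
  intro x hxA y hyA hx hy hxy ε hε
  rcases subsingleton_or_nontrivial B with hS | hN
  · refine ⟨1, ⟨Subsingleton.elim _ _, Subsingleton.elim _ _⟩, ?_, ?_⟩
    · rw [Subsingleton.elim (1*x - x) 0, norm_zero]; exact hε.le
    · rw [Subsingleton.elim ((1-(1:B))*y - y) 0, norm_zero]; exact hε.le
  set a : B := x - y with hadef
  have hxsa : IsSelfAdjoint x := .of_nonneg hx
  have hysa : IsSelfAdjoint y := .of_nonneg hy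
  have hasa : IsSelfAdjoint a := hxsa.sub hysa
  have haA : a ∈ A := sub_mem hxA hyA
  have hyx : y * x = 0 := by
    have := congrArg star hxy
    rwa [star_mul, hxsa.star_eq, hysa.star_eq, star_zero] at this
  obtain ⟨hax', hay'⟩ := posPart_negPart_unique hadef hxy hx hy
  set M := ‖a‖ with hMdef
  set K := ‖x‖ + ‖y‖ + 1 with hKdef
  have hKx : ‖x‖ ≤ K := by rw [hKdef]; linarith [norm_nonneg y]
  have hKy : ‖y‖ ≤ K := by rw [hKdef]; linarith [norm_nonneg x]
  -- choose δ
  have hcont : Continuous (fun δ : ℝ => ((Real.sqrt (δ * (2*M+1)) + δ)/2 + δ) * K) := by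
    fun_prop
  have hev : ∀ᶠ δ in nhdsWithin 0 (Set.Ioi (0:ℝ)),
      ((Real.sqrt (δ * (2*M+1)) + δ)/2 + δ) * K < ε^2 := by
    have ht := (hcont.tendsto 0).mono_left (nhdsWithin_le_nhds (s := Set.Ioi (0:ℝ)))
    have hv : ((Real.sqrt ((0:ℝ) * (2*M+1)) + 0)/2 + 0) * K = 0 := by simp
    rw [hv] at ht
    exact ht.eventually_lt_const (by positivity)
  have hev1 : ∀ᶠ δ in nhdsWithin 0 (Set.Ioi (0:ℝ)), δ < 1 :=
    (eventually_lt_nhds zero_lt_one).filter_mono nhdsWithin_le_nhds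
  obtain ⟨δ, ⟨hδbound, hδ1⟩, hδpos'⟩ := ((hev.and hev1).and self_mem_nhdsWithin).exists
  have hδpos : (0:ℝ) < δ := hδpos'
  have hδ0 : (0:ℝ) ≤ δ := hδpos.le
  obtain ⟨b, hbsa, hbu, habδ⟩ := h a haA hasa δ hδpos
  -- spectral projection
  have hb0 : (0:ℝ) ∉ spectrum ℝ b := by rw [spectrum.zero_notMem_iff]; exact hbu
  set f : ℝ → ℝ := fun t => if 0 < t then 1 else 0 with hfdef
  have hfc : ContinuousOn f (spectrum ℝ b) := by
    intro t ht
    have ht0 : t ≠ 0 := fun h0 => hb0 (h0 ▸ ht)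
    refine ContinuousAt.continuousWithinAt ?_
    rcases ht0.lt_or_gt with hlt | hgt
    · have hev' : f =ᶠ[nhds t] (fun _ => 0) := by
        filter_upwards [Iio_mem_nhds hlt] with s hs
        simp only [hfdef]
        rw [if_neg (not_lt.mpr (le_of_lt hs))]
      exact continuousAt_const.congr hev'.symm
    · have hev' : f =ᶠ[nhds t] (fun _ => 1) := by
        filter_upwards [Ioi_mem_nhds hgt] with s hs
        simp only [hfdef]
        rw [if_pos (show (0:ℝ) < s from hs)]
      exact continuousAt_const.congr hev'.symm
  set p := cfc f b with hpdef
  have hpsa : IsSelfAdjoint p := cfc_predicate f b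
  have hidem : p * p = p := by
    rw [hpdef, ← cfc_mul f f b hfc hfc]
    exact cfc_congr fun t _ => by by_cases h0 : 0 < t <;> simp [hfdef, h0]
  have hpnorm : ‖p‖ ≤ 1 := by
    rw [hpdef]
    exact norm_cfc_le zero_le_one fun t _ => by by_cases h0 : 0 < t <;> simp [hfdef, h0]
  set q : B := 1 - p with hqdef
  have hqsa : IsSelfAdjoint q := (IsSelfAdjoint.one (R := B)).sub hpsa
  have hqeq : q = cfc (fun t => 1 - f t) b := by
    rw [cfc_sub (fun _ => 1) f b (by fun_prop) hfc, cfc_const_one ℝ b hbsa, hqdef, hpdef]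
  have hqnorm : ‖q‖ ≤ 1 := by
    rw [hqeq]
    exact norm_cfc_le zero_le_one fun t _ => by by_cases h0 : 0 < t <;> simp [hfdef, h0]
  have hpb : p * b = b⁺ := by
    have h1 : cfc (fun t : ℝ => f t * t) b = p * cfc (fun t : ℝ => t) b :=
      cfc_mul f (fun t => t) b hfc (by fun_prop)
    rw [cfc_id' ℝ b hbsa] at h1
    rw [← h1, CFC.posPart_def, cfcₙ_eq_cfc]
    refine cfc_congr fun t _ => ?_
    by_cases h0 : 0 < t
    · simp [hfdef, h0, _root_.posPart_def, sup_eq_left.2 h0.le]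
    · simp [hfdef, h0, _root_.posPart_def, sup_eq_right.2 (not_lt.mp h0)]
  have hqb : q * b = -(b⁻) := by
    have hsub := CFC.posPart_sub_negPart b hbsa
    rw [hqdef, sub_mul, one_mul, hpb, sub_eq_iff_eq_add]
    conv_lhs => rw [← hsub]
    abel
  -- norm bounds on b
  have hbnorm : ‖b‖ ≤ M + 1 := by
    calc ‖b‖ = ‖a - (a - b)‖ := by congr 1; abel
      _ ≤ ‖a‖ + ‖a - b‖ := norm_sub_le _ _
      _ ≤ M + 1 := add_le_add le_rfl (habδ.trans hδ1.le)
  set η := (Real.sqrt (δ*(2*M+1)) + δ)/2 with hηdef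
  have hη0 : 0 ≤ η := by
    have := Real.sqrt_nonneg (δ*(2*M+1))
    rw [hηdef]; linarith
  have hprod : ‖a - b‖ * (‖a‖ + ‖b‖) ≤ δ * (2*M+1) :=
    mul_le_mul habδ (by rw [← hMdef]; linarith) (by positivity) hδ0
  have hneg : ‖b⁻ - a⁻‖ ≤ η := by
    refine (aux_negPart_diff hbsa hasa).trans ?_
    rw [hηdef]
    have h1 : ‖b - a‖ = ‖a - b‖ := norm_sub_rev _ _
    have h2 : Real.sqrt (‖b - a‖ * (‖b‖ + ‖a‖)) ≤ Real.sqrt (δ*(2*M+1)) := by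
      apply Real.sqrt_le_sqrt
      rw [h1]
      calc ‖a - b‖ * (‖b‖ + ‖a‖) = ‖a - b‖ * (‖a‖ + ‖b‖) := by ring
        _ ≤ δ * (2*M+1) := hprod
    have h3 : ‖b - a‖ ≤ δ := h1 ▸ habδ
    linarith
  have hposP : ‖b⁺ - a⁺‖ ≤ η := by
    rw [← CFC.negPart_neg b, ← CFC.negPart_neg a]
    refine (aux_negPart_diff hbsa.neg hasa.neg).trans ?_
    rw [hηdef]
    have e1 : (-b) - (-a) = a - b := by abel
    rw [e1, norm_neg, norm_neg]
    have h2 : Real.sqrt (‖a - b‖ * (‖b‖ + ‖a‖)) ≤ Real.sqrt (δ*(2*M+1)) := by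
      apply Real.sqrt_le_sqrt
      calc ‖a - b‖ * (‖b‖ + ‖a‖) = ‖a - b‖ * (‖a‖ + ‖b‖) := by ring
        _ ≤ δ * (2*M+1) := hprod
    have h3 : ‖a - b‖ ≤ δ := habδ
    linarith
  -- estimate 1 : ‖q * x‖
  have hax : a * x = x * x := by rw [hadef, sub_mul, hyx, sub_zero]
  have hqx2 : q * (x * x) = -(b⁻ * x) + (q * (a - b)) * x := by
    have h1 : q * (x*x) = (q * a) * x := by rw [← hax, mul_assoc]
    have h2 : q * a = q * b + q * (a - b) := by rw [← mul_add]; congr 1; abel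
    rw [h1, h2, add_mul, hqb, neg_mul]
  have hanx : a⁻ * x = 0 := by rw [hay', hyx]
  have hb3 : ‖b⁻ * x‖ ≤ η * ‖x‖ := by
    calc ‖b⁻ * x‖ = ‖(b⁻ - a⁻) * x‖ := by rw [sub_mul, hanx, sub_zero]
      _ ≤ ‖b⁻ - a⁻‖ * ‖x‖ := norm_mul_le _ _
      _ ≤ η * ‖x‖ := mul_le_mul_of_nonneg_right hneg (norm_nonneg x)
  have hqx2norm : ‖q * (x*x)‖ ≤ (η + δ) * ‖x‖ := by
    rw [hqx2]
    calc ‖-(b⁻ * x) + (q * (a - b)) * x‖ ≤ ‖-(b⁻ * x)‖ + ‖(q * (a - b)) * x‖ := norm_add_le _ _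
      _ = ‖b⁻ * x‖ + ‖(q * (a - b)) * x‖ := by rw [norm_neg]
      _ ≤ η * ‖x‖ + (‖q‖ * ‖a - b‖) * ‖x‖ := by
          refine add_le_add hb3 ?_
          refine (norm_mul_le _ _).trans ?_
          exact mul_le_mul_of_nonneg_right (norm_mul_le _ _) (norm_nonneg x)
      _ ≤ η * ‖x‖ + (1 * δ) * ‖x‖ := by
          refine add_le_add le_rfl ?_
          refine mul_le_mul_of_nonneg_right ?_ (norm_nonneg x)
          exact mul_le_mul hqnorm habδ (norm_nonneg _) zero_le_one
      _ = (η + δ) * ‖x‖ := by ring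
  have hqx : ‖q * x‖^2 ≤ (η + δ) * ‖x‖ := by
    have he : ‖q * x‖^2 = ‖(q * (x*x)) * q‖ := by
      have h1 : ‖(q*x) * star (q*x)‖ = ‖q*x‖ * ‖q*x‖ := CStarRing.norm_self_mul_star
      have h2 : star (q*x) = x * q := by rw [star_mul, hxsa.star_eq, hqsa.star_eq]
      have h3 : (q*x) * (x*q) = (q * (x*x)) * q := by noncomm_ring
      rw [sq, ← h1, h2, h3]
    rw [he]
    calc ‖(q * (x*x)) * q‖ ≤ ‖q * (x*x)‖ * ‖q‖ := norm_mul_le _ _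
      _ ≤ ((η + δ) * ‖x‖) * 1 := by
          refine mul_le_mul hqx2norm hqnorm (norm_nonneg _) ?_
          have := norm_nonneg (q * (x*x))
          linarith [hqx2norm, mul_nonneg (add_nonneg hη0 hδ0) (norm_nonneg x)]
      _ = (η + δ) * ‖x‖ := by ring
  have hfinal1 : ‖q * x‖ ≤ ε := by
    have hb2 : (η + δ) * K < ε^2 := hδbound
    have h4 : (η + δ) * ‖x‖ ≤ (η + δ) * K :=
      mul_le_mul_of_nonneg_left hKx (add_nonneg hη0 hδ0)
    nlinarith [norm_nonneg (q*x), hε]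
  -- estimate 2 : ‖p * y‖
  have hay2 : a * y = -(y * y) := by rw [hadef, sub_mul, hxy, zero_sub]
  have hpy2 : p * (y * y) = -(b⁺ * y) - (p * (a - b)) * y := by
    have h1 : (p * a) * y = -(p * (y*y)) := by rw [mul_assoc, hay2, mul_neg]
    have h2 : p * a = p * b + p * (a - b) := by rw [← mul_add]; congr 1; abel
    have h3 : p * (y*y) = -((p*a) * y) := by rw [h1, neg_neg]
    rw [h3, h2, add_mul, hpb, neg_add]
    abel
  have hapx : a⁺ * y = 0 := by rw [hax', hxy]
  have hb4 : ‖b⁺ * y‖ ≤ η * ‖y‖ := by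
    calc ‖b⁺ * y‖ = ‖(b⁺ - a⁺) * y‖ := by rw [sub_mul, hapx, sub_zero]
      _ ≤ ‖b⁺ - a⁺‖ * ‖y‖ := norm_mul_le _ _
      _ ≤ η * ‖y‖ := mul_le_mul_of_nonneg_right hposP (norm_nonneg y)
  have hpy2norm : ‖p * (y*y)‖ ≤ (η + δ) * ‖y‖ := by
    rw [hpy2]
    calc ‖-(b⁺ * y) - (p * (a - b)) * y‖ ≤ ‖-(b⁺ * y)‖ + ‖(p * (a - b)) * y‖ := norm_sub_le _ _
      _ = ‖b⁺ * y‖ + ‖(p * (a - b)) * y‖ := by rw [norm_neg]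
      _ ≤ η * ‖y‖ + (‖p‖ * ‖a - b‖) * ‖y‖ := by
          refine add_le_add hb4 ?_
          refine (norm_mul_le _ _).trans ?_
          exact mul_le_mul_of_nonneg_right (norm_mul_le _ _) (norm_nonneg y)
      _ ≤ η * ‖y‖ + (1 * δ) * ‖y‖ := by
          refine add_le_add le_rfl ?_
          refine mul_le_mul_of_nonneg_right ?_ (norm_nonneg y)
          exact mul_le_mul hpnorm habδ (norm_nonneg _) zero_le_one
      _ = (η + δ) * ‖y‖ := by ring
  have hpy : ‖p * y‖^2 ≤ (η + δ) * ‖y‖ := by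
    have he : ‖p * y‖^2 = ‖(p * (y*y)) * p‖ := by
      have h1 : ‖(p*y) * star (p*y)‖ = ‖p*y‖ * ‖p*y‖ := CStarRing.norm_self_mul_star
      have h2 : star (p*y) = y * p := by rw [star_mul, hysa.star_eq, hpsa.star_eq]
      have h3 : (p*y) * (y*p) = (p * (y*y)) * p := by noncomm_ring
      rw [sq, ← h1, h2, h3]
    rw [he]
    calc ‖(p * (y*y)) * p‖ ≤ ‖p * (y*y)‖ * ‖p‖ := norm_mul_le _ _
      _ ≤ ((η + δ) * ‖y‖) * 1 := mul_le_mul hpy2norm hpnorm (norm_nonneg _)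
          (mul_nonneg (add_nonneg hη0 hδ0) (norm_nonneg y))
      _ = (η + δ) * ‖y‖ := by ring
  have hfinal2 : ‖p * y‖ ≤ ε := by
    have hb2 : (η + δ) * K < ε^2 := hδbound
    have h4 : (η + δ) * ‖y‖ ≤ (η + δ) * K :=
      mul_le_mul_of_nonneg_left hKy (add_nonneg hη0 hδ0)
    nlinarith [norm_nonneg (p*y), hε]
  refine ⟨p, ⟨hpsa.star_eq, hidem⟩, ?_, ?_⟩
  · have e : p * x - x = -(q * x) := by rw [hqdef, sub_mul, one_mul]; abel
    rw [e, norm_neg]; exact hfinal1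
  · have e : (1 - p) * y - y = -(p * y) := by rw [sub_mul, one_mul]; abel
    rw [e, norm_neg]; exact hfinal2
end

section
/- Let A ⊆ B be an inclusion of unital C*-algebras with A a closed *-subalgebra of B containing the unit 1_B. Suppose that for all positive x, y ∈ A with x·y = 0 and every ε > 0 there exists a projection p ∈ B such that ‖p·x − x‖ ≤ ε and ‖(1−p)·y − y‖ ≤ ε. Then for every self-adjoint a ∈ A and every ε > 0 there exists an invertible self-adjoint b ∈ B with ‖a − b‖ ≤ ε. -/
lemma cfc_complex_mem_elemental {B : Type*} [CStarAlgebra B] (a : B) [IsStarNormal a]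
    (g : ℂ → ℂ) : cfc g a ∈ StarAlgebra.elemental ℂ a := by
  by_cases hg : ContinuousOn g (spectrum ℂ a)
  · rw [cfc_apply g a, cfcHom_eq_of_isStarNormal]
    simp only [StarAlgHom.comp_apply, StarSubalgebra.coe_subtype]
    exact SetLike.coe_mem _
  · rw [cfc_apply_of_not_continuousOn a hg]; exact zero_mem _

theorem stmt3 {B : Type*} [CStarAlgebra B] [PartialOrder B] [StarOrderedRing B]
    (A : StarSubalgebra ℂ B) (hA : IsClosed (A : Set B))
    (h : ∀ x ∈ A, ∀ y ∈ A, 0 ≤ x → 0 ≤ y → x * y = 0 → ∀ ε : ℝ, 0 < ε →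
      ∃ p : B, IsProjection p ∧ ‖p * x - x‖ ≤ ε ∧ ‖(1 - p) * y - y‖ ≤ ε) :
    ∀ a ∈ A, IsSelfAdjoint a → ∀ ε : ℝ, 0 < ε →
      ∃ b : B, IsSelfAdjoint b ∧ IsUnit b ∧ ‖a - b‖ ≤ ε := by
  intro a haA hsa ε hε
  rcases subsingleton_or_nontrivial B with hB | hB
  · exact ⟨1, by rw [IsSelfAdjoint, star_one], isUnit_one,
      by rw [Subsingleton.elim (a - 1) 0, norm_zero]; exact hε.le⟩
  have hnormal : IsStarNormal a := hsa.isStarNormal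
  have hle : StarAlgebra.elemental ℂ a ≤ A := StarAlgebra.elemental.le_of_mem hA haA
  set x : B := a⁺ with hxdef
  set y : B := a⁻ with hydef
  have hxA : x ∈ A := by
    apply hle
    rw [hxdef, CFC.posPart_def, cfcₙ_eq_cfc, cfc_real_eq_complex]
    exact cfc_complex_mem_elemental a _
  have hyA : y ∈ A := by
    apply hle
    rw [hydef, CFC.negPart_def, cfcₙ_eq_cfc, cfc_real_eq_complex]
    exact cfc_complex_mem_elemental a _
  have hx : (0 : B) ≤ x := CFC.posPart_nonneg a
  have hy : (0 : B) ≤ y := CFC.negPart_nonneg a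
  have hxsa : IsSelfAdjoint x := IsSelfAdjoint.of_nonneg hx
  have hysa : IsSelfAdjoint y := IsSelfAdjoint.of_nonneg hy
  have hxyB : x * y = 0 := CFC.posPart_mul_negPart a
  have hsubB : x - y = a := CFC.posPart_sub_negPart a hsa
  set t : ℝ := ε / 5 with htdef
  have ht : 0 < t := by positivity
  obtain ⟨p, ⟨hps, hpp⟩, h1, h2⟩ := h x hxA y hyA hx hy hxyB t ht
  obtain ⟨q, hqdef⟩ : ∃ q : B, q = 1 - p := ⟨_, rfl⟩
  rw [← hqdef] at h2
  have hqs : star q = q := by rw [hqdef, star_sub, star_one, hps]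
  have hqq : q * q = q := by
    rw [hqdef]; simp [sub_mul, mul_sub, hpp]
  have hpq : p * q = 0 := by rw [hqdef, mul_sub, mul_one, hpp, sub_self]
  have hqp : q * p = 0 := by rw [hqdef, sub_mul, one_mul, hpp, sub_self]
  have hpq1 : p + q = 1 := by rw [hqdef]; abel
  -- norms of projections
  have hproj_norm : ∀ r : B, star r = r → r * r = r → ‖r‖ ≤ 1 := by
    intro r hr1 hr2
    have : ‖r‖ * ‖r‖ = ‖r‖ := by
      conv_rhs => rw [← hr2]
      rw [← CStarRing.norm_star_mul_self, hr1, hr2]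
    nlinarith [norm_nonneg r]
  have hpnorm : ‖p‖ ≤ 1 := hproj_norm p hps hpp
  have hqnorm : ‖q‖ ≤ 1 := hproj_norm q hqs hqq
  -- estimate ‖x - p*x*p‖
  have e2 : ‖x * p - x‖ ≤ t := by
    have hst : star (p * x - x) = x * p - x := by
      rw [star_sub, star_mul, hps, hxsa.star_eq]
    calc ‖x * p - x‖ = ‖star (p * x - x)‖ := by rw [hst]
      _ = ‖p * x - x‖ := norm_star _
      _ ≤ t := h1
  have hxe : ‖x - p * x * p‖ ≤ 2 * t := by
    have key : x - p * x * p = (x - p * x) + p * (x - x * p) := by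
      rw [mul_sub, ← mul_assoc]; abel
    have n1 : ‖x - p * x‖ ≤ t := by
      rw [← norm_neg, neg_sub]; exact h1
    have n2 : ‖p * (x - x * p)‖ ≤ t := by
      calc ‖p * (x - x * p)‖ ≤ ‖p‖ * ‖x - x * p‖ := norm_mul_le _ _
        _ ≤ 1 * t := by
            apply mul_le_mul hpnorm ?_ (norm_nonneg _) zero_le_one
            rw [← norm_neg, neg_sub]; exact e2
        _ = t := one_mul t
    calc ‖x - p * x * p‖ = ‖(x - p * x) + p * (x - x * p)‖ := by rw [key]
      _ ≤ ‖x - p * x‖ + ‖p * (x - x * p)‖ := norm_add_le _ _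
      _ ≤ t + t := add_le_add n1 n2
      _ = 2 * t := by ring
  have h2' : ‖q * y - y‖ ≤ t := h2
  have e2' : ‖y * q - y‖ ≤ t := by
    have hst : star (q * y - y) = y * q - y := by
      rw [star_sub, star_mul, hqs, hysa.star_eq]
    calc ‖y * q - y‖ = ‖star (q * y - y)‖ := by rw [hst]
      _ = ‖q * y - y‖ := norm_star _
      _ ≤ t := h2'
  have hye : ‖y - q * y * q‖ ≤ 2 * t := by
    have key : y - q * y * q = (y - q * y) + q * (y - y * q) := by
      rw [mul_sub, ← mul_assoc]; abel
    have n1 : ‖y - q * y‖ ≤ t := by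
      rw [← norm_neg, neg_sub]; exact h2'
    have n2 : ‖q * (y - y * q)‖ ≤ t := by
      calc ‖q * (y - y * q)‖ ≤ ‖q‖ * ‖y - y * q‖ := norm_mul_le _ _
        _ ≤ 1 * t := by
            apply mul_le_mul hqnorm ?_ (norm_nonneg _) zero_le_one
            rw [← norm_neg, neg_sub]; exact e2'
        _ = t := one_mul t
    calc ‖y - q * y * q‖ = ‖(y - q * y) + q * (y - y * q)‖ := by rw [key]
      _ ≤ ‖y - q * y‖ + ‖q * (y - y * q)‖ := norm_add_le _ _
      _ ≤ t + t := add_le_add n1 n2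
      _ = 2 * t := by ring
  -- the candidate
  obtain ⟨b, hbdef⟩ : ∃ b : B, b = p * x * p - q * y * q + t • p - t • q := ⟨_, rfl⟩
  -- b is self-adjoint
  have hbsa : IsSelfAdjoint b := by
    rw [hbdef]
    have s1 : star (p * x * p) = p * x * p := by
      rw [star_mul, star_mul, hps, hxsa.star_eq, mul_assoc]
    have s2 : star (q * y * q) = q * y * q := by
      rw [star_mul, star_mul, hqs, hysa.star_eq, mul_assoc]
    rw [IsSelfAdjoint, star_sub, star_add, star_sub, s1, s2, star_smul, star_smul,
      star_trivial, hps, hqs]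
  -- invertibility
  have hpxp : (0 : B) ≤ p * x * p := by
    have := star_left_conjugate_nonneg hx p
    rwa [hps] at this
  have hqyq : (0 : B) ≤ q * y * q := by
    have := star_left_conjugate_nonneg hy q
    rwa [hqs] at this
  have hsmul_unit : IsUnit (t • (1 : B)) := by
    refine ⟨⟨t • 1, t⁻¹ • 1, ?_, ?_⟩, rfl⟩
    · rw [smul_mul_smul_comm, one_mul, mul_inv_cancel₀ ht.ne', one_smul]
    · rw [smul_mul_smul_comm, one_mul, inv_mul_cancel₀ ht.ne', one_smul]
  have hsmul_nonneg : (0 : B) ≤ t • (1 : B) := smul_nonneg ht.le zero_le_one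
  obtain ⟨w, hw⟩ : IsUnit (t • (1 : B) + p * x * p) :=
    CStarAlgebra.isUnit_of_le _ (le_add_of_nonneg_right hpxp) ⟨hsmul_nonneg, hsmul_unit⟩
  obtain ⟨z, hz⟩ : IsUnit (t • (1 : B) + q * y * q) :=
    CStarAlgebra.isUnit_of_le _ (le_add_of_nonneg_right hqyq) ⟨hsmul_nonneg, hsmul_unit⟩
  have hpp' : ∀ r : B, p * (p * r) = p * r := fun r => by rw [← mul_assoc, hpp]
  have hqq' : ∀ r : B, q * (q * r) = q * r := fun r => by rw [← mul_assoc, hqq]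
  have hpq' : ∀ r : B, p * (q * r) = 0 := fun r => by rw [← mul_assoc, hpq, zero_mul]
  have hqp' : ∀ r : B, q * (p * r) = 0 := fun r => by rw [← mul_assoc, hqp, zero_mul]
  have hcpw : Commute p (w : B) := by
    unfold Commute SemiconjBy
    simp only [hw, mul_add, add_mul, mul_smul_comm, smul_mul_assoc, mul_one, one_mul, mul_assoc,
      hpp', hpp]
  have hcqz : Commute q (z : B) := by
    unfold Commute SemiconjBy
    simp only [hz, mul_add, add_mul, mul_smul_comm, smul_mul_assoc, mul_one, one_mul, mul_assoc,
      hqq', hqq]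
  have hpz : p * (z : B) = t • p := by
    simp only [hz, mul_add, mul_smul_comm, mul_one, mul_assoc, hpq', add_zero]
  have hqw : q * (w : B) = t • q := by
    simp only [hw, mul_add, mul_smul_comm, mul_one, mul_assoc, hqp', add_zero]
  have hcpwi : Commute p ((w⁻¹ : Bˣ) : B) := hcpw.units_inv_right
  have hczqi : Commute q ((z⁻¹ : Bˣ) : B) := hcqz.units_inv_right
  have hb : b = (w : B) * p - (z : B) * q := by
    rw [hbdef, hw, hz]
    simp only [add_mul, smul_mul_assoc, one_mul, mul_assoc, hpp, hqq]
    abel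
  obtain ⟨c, hcdef⟩ : ∃ c : B, c = p * ((w⁻¹ : Bˣ) : B) - q * ((z⁻¹ : Bˣ) : B) := ⟨_, rfl⟩
  have hpzq : p * ((z : B) * q) = 0 := by
    rw [← mul_assoc, hpz, smul_mul_assoc, hpq, smul_zero]
  have hqwp : q * ((w : B) * p) = 0 := by
    rw [← mul_assoc, hqw, smul_mul_assoc, hqp, smul_zero]
  have hbc : b * c = 1 := by
    rw [hb, hcdef, sub_mul, mul_sub, mul_sub]
    have k1 : (w : B) * p * (p * ((w⁻¹ : Bˣ) : B)) = p := by
      rw [mul_assoc, hpp', hcpwi.eq, ← mul_assoc, w.mul_inv, one_mul]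
    have k2 : (w : B) * p * (q * ((z⁻¹ : Bˣ) : B)) = 0 := by
      rw [mul_assoc, hpq', mul_zero]
    have k3 : (z : B) * q * (p * ((w⁻¹ : Bˣ) : B)) = 0 := by
      rw [mul_assoc, hqp', mul_zero]
    have k4 : (z : B) * q * (q * ((z⁻¹ : Bˣ) : B)) = q := by
      rw [mul_assoc, hqq', hczqi.eq, ← mul_assoc, z.mul_inv, one_mul]
    rw [k1, k2, k3, k4, sub_zero, zero_sub, sub_neg_eq_add, hpq1]
  have hcb : c * b = 1 := by
    rw [hb, hcdef, sub_mul, mul_sub, mul_sub]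
    have k1 : p * ((w⁻¹ : Bˣ) : B) * ((w : B) * p) = p := by
      rw [mul_assoc, ← mul_assoc ((w⁻¹ : Bˣ) : B), w.inv_mul, one_mul, hpp]
    have k2 : p * ((w⁻¹ : Bˣ) : B) * ((z : B) * q) = 0 := by
      rw [hcpwi.eq, mul_assoc, hpzq, mul_zero]
    have k3 : q * ((z⁻¹ : Bˣ) : B) * ((w : B) * p) = 0 := by
      rw [hczqi.eq, mul_assoc, hqwp, mul_zero]
    have k4 : q * ((z⁻¹ : Bˣ) : B) * ((z : B) * q) = q := by
      rw [mul_assoc, ← mul_assoc ((z⁻¹ : Bˣ) : B), z.inv_mul, one_mul, hqq]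
    rw [k1, k2, k3, k4, sub_zero, zero_sub, sub_neg_eq_add, hpq1]
  have hbu : IsUnit b := ⟨⟨b, c, hbc, hcb⟩, rfl⟩
  -- norm estimate
  have hpmq : ‖p - q‖ ≤ 1 := by
    have hs : star (p - q) = p - q := by rw [star_sub, hps, hqs]
    have hsq : (p - q) * (p - q) = 1 := by
      rw [sub_mul, mul_sub, mul_sub, hpp, hqq, hpq, hqp, sub_zero, zero_sub, sub_neg_eq_add, hpq1]
    have : ‖p - q‖ * ‖p - q‖ = 1 := by
      rw [← CStarRing.norm_star_mul_self, hs, hsq, norm_one]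
    nlinarith [norm_nonneg (p - q)]
  have hdiff : a - b = (x - p * x * p) - (y - q * y * q) - t • (p - q) := by
    rw [← hsubB, hbdef, smul_sub]
    abel
  have : ‖a - b‖ ≤ ε := by
    rw [hdiff]
    calc ‖(x - p * x * p) - (y - q * y * q) - t • (p - q)‖
        ≤ ‖(x - p * x * p) - (y - q * y * q)‖ + ‖t • (p - q)‖ := norm_sub_le _ _
      _ ≤ (‖x - p * x * p‖ + ‖y - q * y * q‖) + ‖t • (p - q)‖ := by
          gcongr; exact norm_sub_le _ _
      _ ≤ (2 * t + 2 * t) + t * 1 := by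
          refine add_le_add (add_le_add hxe hye) ?_
          rw [norm_smul, Real.norm_eq_abs, abs_of_pos ht]
          exact mul_le_mul_of_nonneg_left hpmq ht.le
      _ = ε := by rw [htdef]; ring
  exact ⟨b, hbsa, hbu, this⟩
end
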